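/- The substitution t = x·ψ(x)^{-2}, v = ψ(x)·ψ'(x) transforms the equation 3x·ψ'' + 6x·(ψ')³ − 4ψ·(ψ')² − 3ψ' = 0 into the first-order equation t·dv/dt = v·((4/3)v + 1) + t·v²·(2v+9)/(3(1 − 2tv)). -/

import Mathlib

/-- The substitution `t = x ψ(x)⁻²`, `v = ψ(x) ψ'(x)` turns the second order equation
`3x ψ'' + 6x (ψ')³ − 4ψ (ψ')² − 3ψ' = 0` into the first order equation
`t dv/dt = v((4/3)v + 1) + t v² (2v+9) / (3(1 − 2tv))`, where `dv/dt = v'(x)/t'(x)`. -/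
theorem gavrilov_substitution (ψ : ℝ → ℝ) (hψ : ContDiff ℝ 2 ψ)
    (hpos : ∀ y, ψ y > 0) (x : ℝ)
    (hode : 3 * x * deriv (deriv ψ) x + 6 * x * (deriv ψ x)^3
      - 4 * ψ x * (deriv ψ x)^2 - 3 * deriv ψ x = 0)
    (t : ℝ → ℝ) (ht : ∀ y, t y = y / (ψ y)^2)
    (v : ℝ → ℝ) (hv : ∀ y, v y = ψ y * deriv ψ y)
    (ht' : deriv t x ≠ 0) (hden : 1 - 2 * t x * v x ≠ 0) :
    t x * (deriv v x / deriv t x) =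
      v x * ((4/3) * v x + 1)
        + t x * (v x)^2 * (2 * v x + 9) / (3 * (1 - 2 * t x * v x)) := by
  have h1 : Differentiable ℝ ψ := hψ.differentiable (by norm_num)
  have h2 : Differentiable ℝ (deriv ψ) := by
    have h : ContDiff ℝ ((1:ℕ∞)+1) ψ := by exact_mod_cast hψ
    rw [contDiff_succ_iff_deriv] at h
    exact h.2.2.differentiable (by simp)
  have hψd : HasDerivAt ψ (deriv ψ x) x := (h1 x).hasDerivAt
  have hψ2 : HasDerivAt (fun y => (ψ y)^2) (2 * ψ x * deriv ψ x) x := by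
    simpa [mul_comm, mul_assoc] using hψd.fun_pow 2
  have hne : (ψ x)^2 ≠ 0 := pow_ne_zero 2 (hpos x).ne'
  have htd : HasDerivAt t ((1 * (ψ x)^2 - x * (2 * ψ x * deriv ψ x)) / ((ψ x)^2)^2) x := by
    rw [funext ht]; exact (hasDerivAt_id x).div hψ2 hne
  have hvd : HasDerivAt v (deriv ψ x * deriv ψ x + ψ x * deriv (deriv ψ) x) x := by
    rw [funext hv]
    simpa [mul_comm] using hψd.fun_mul ((h2 x).hasDerivAt)
  rw [htd.deriv] at ht' ⊢
  rw [hvd.deriv, ht x, hv x]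
  rw [ht x, hv x] at hden
  have hpne : ψ x ≠ 0 := (hpos x).ne'
  set a := ψ x with ha
  set b := deriv ψ x with hb
  set c := deriv (deriv ψ) x with hc
  clear_value a b c
  field_simp at hden ht' ⊢
  have hden' : a - 2 * x * b ≠ 0 := fun h => hden (by rw [h]; simp)
  have e : (2*a*b+9)/(a-2*x*b)*(a-2*x*b) = 2*a*b+9 := div_mul_cancel₀ _ hden'
  rw [div_eq_iff hden']
  linear_combination a * hode - x*b^2*e
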